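/- For any k ∈ ℕ, the square He_k² of the k-th probabilists' Hermite polynomial has nonzero projection onto He_0 or He_2 in the Gaussian L² inner product; equivalently, the information exponent of He_k² is at most 2, meaning min{ j > 0 : E[He_k(z)² He_j(z)] ≠ 0 for z ~ N(0,1) } ≤ 2 (interpreting the min over nonzero Hermite coefficients beyond the constant term), for k ≥ 1. -/

import Mathlib

/-- The k-th probabilists' Hermite polynomial evaluated at `t : ℝ`. -/
noncomputable def He (k : ℕ) (t : ℝ) : ℝ := Polynomial.aeval t (Polynomial.hermite k)

open Polynomial MeasureTheory Real Filter
open scoped NNReal ENNReal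

namespace HermiteIE

/-- Gaussian kernel. -/
noncomputable def G (x : ℝ) : ℝ := Real.exp (-(x ^ 2 / 2))

lemma integrable_aeval_mul_G (p : Polynomial ℤ) :
    Integrable (fun x : ℝ => (aeval x p : ℝ) * G x) := by
  induction p using Polynomial.induction_on' with
  | add p q hp hq => simpa [add_mul, Pi.add_def] using hp.add hq
  | monomial n a =>
      have h : Integrable (fun x : ℝ => x ^ n * G x) := by
        have h2 := integrable_rpow_mul_exp_neg_mul_sq (b := (1:ℝ)/2) (by norm_num)
          (s := (n : ℝ)) (lt_of_lt_of_le neg_one_lt_zero (Nat.cast_nonneg n))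
        have harg : ∀ x : ℝ, -(1/2 : ℝ) * x ^ 2 = -(x ^ 2 / 2) := fun x => by ring
        have he : (fun x : ℝ => x ^ (n:ℝ) * Real.exp (-(1/2) * x ^ 2))
            = fun x : ℝ => x ^ n * G x := by
          funext x; rw [Real.rpow_natCast, harg]; rfl
        rwa [he] at h2
      have h3 := h.const_mul (a : ℝ)
      refine h3.congr ?_
      filter_upwards with x
      simp [aeval_monomial, mul_assoc]

lemma tendsto_aeval_mul_G_atTop (p : Polynomial ℤ) :
    Tendsto (fun x : ℝ => (aeval x p : ℝ) * G x) atTop (nhds 0) := by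
  induction p using Polynomial.induction_on' with
  | add p q hp hq =>
      have := hp.add hq
      simpa [add_mul] using this
  | monomial n a =>
      have h : Tendsto (fun x : ℝ => x ^ n * G x) atTop (nhds 0) := by
        have h1 := tendsto_pow_mul_exp_neg_atTop_nhds_zero n
        refine tendsto_of_tendsto_of_tendsto_of_le_of_le' tendsto_const_nhds h1 ?_ ?_
        · filter_upwards [eventually_ge_atTop (0:ℝ)] with x hx
          exact mul_nonneg (pow_nonneg hx n) (Real.exp_pos _).le
        · filter_upwards [eventually_ge_atTop (2:ℝ)] with x hx
          have hx0 : (0:ℝ) ≤ x := by linarith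
          have hle : Real.exp (-(x ^ 2 / 2)) ≤ Real.exp (-x) := by
            apply Real.exp_le_exp.2; nlinarith
          exact mul_le_mul_of_nonneg_left hle (pow_nonneg hx0 n)
      have h3 := h.const_mul (a : ℝ)
      rw [mul_zero] at h3
      refine h3.congr fun x => ?_
      simp [aeval_monomial, mul_assoc]

lemma tendsto_aeval_mul_G_atBot (p : Polynomial ℤ) :
    Tendsto (fun x : ℝ => (aeval x p : ℝ) * G x) atBot (nhds 0) := by
  have h := (tendsto_aeval_mul_G_atTop (p.comp (-X))).comp tendsto_neg_atBot_atTop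
  refine h.congr fun x => ?_
  simp [Function.comp_def, aeval_comp, G, neg_sq]

/-- The basic Gaussian-weighted integral of an integer polynomial. -/
noncomputable def J (p : Polynomial ℤ) : ℝ := ∫ x : ℝ, (aeval x p : ℝ) * G x

lemma J_add (p q : Polynomial ℤ) : J (p + q) = J p + J q := by
  unfold J
  simp_rw [map_add, add_mul]
  exact integral_add (integrable_aeval_mul_G p) (integrable_aeval_mul_G q)

lemma J_sub (p q : Polynomial ℤ) : J (p - q) = J p - J q := by
  unfold J
  simp_rw [map_sub, sub_mul]
  exact integral_sub (integrable_aeval_mul_G p) (integrable_aeval_mul_G q)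

lemma J_C_mul (a : ℤ) (p : Polynomial ℤ) : J (C a * p) = (a : ℝ) * J p := by
  unfold J
  simp_rw [map_mul, aeval_C, algebraMap_int_eq, eq_intCast, mul_assoc]
  exact integral_const_mul _ _

lemma J_zero : J 0 = 0 := by
  unfold J; simp

lemma J_deriv_sub (p : Polynomial ℤ) : J (derivative p - X * p) = 0 := by
  set f : ℝ → ℝ := fun x => (aeval x p : ℝ) * G x with hf
  set f' : ℝ → ℝ := fun x => (aeval x (derivative p - X * p) : ℝ) * G x with hf'
  have hderiv : ∀ x : ℝ, HasDerivAt f (f' x) x := by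
    intro x
    have h1 : HasDerivAt (fun y : ℝ => (aeval y p : ℝ)) (aeval x (derivative p)) x :=
      p.hasDerivAt_aeval x
    have h2 : HasDerivAt G (-x * G x) x := by
      have ha : HasDerivAt (fun y : ℝ => -(y ^ 2 / 2)) (-x) x := by
        have := (hasDerivAt_pow 2 x).div_const 2
        have := this.neg
        refine this.congr_deriv ?_
        push_cast; ring
      have := ha.exp
      refine this.congr_deriv ?_
      unfold G; ring
    have h3 := h1.mul h2
    refine h3.congr_deriv ?_
    simp only [hf', map_sub, map_mul, aeval_X]
    ring
  have hint : Integrable f' := integrable_aeval_mul_G _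
  have htop : Tendsto f atTop (nhds 0) := tendsto_aeval_mul_G_atTop p
  have hbot : Tendsto f atBot (nhds 0) := tendsto_aeval_mul_G_atBot p
  have hIoi : ∫ x in Set.Ioi (0:ℝ), f' x = 0 - f 0 :=
    integral_Ioi_of_hasDerivAt_of_tendsto' (fun x _ => hderiv x) hint.integrableOn htop
  have hIic : ∫ x in Set.Iic (0:ℝ), f' x = f 0 - 0 :=
    integral_Iic_of_hasDerivAt_of_tendsto' (fun x _ => hderiv x) hint.integrableOn hbot
  have hsplit := intervalIntegral.integral_Iic_add_Ioi (b := (0:ℝ)) (μ := volume) (f := f')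
    hint.integrableOn hint.integrableOn
  have : J (derivative p - X * p) = ∫ x : ℝ, f' x := rfl
  rw [this, ← hsplit, hIoi, hIic]
  ring

lemma J_step (n : ℕ) (q : Polynomial ℤ) :
    J (hermite (n+1) * q) = J (hermite n * derivative q) := by
  have h0 := J_deriv_sub (hermite n * q)
  have e1 : hermite (n+1) * q =
      hermite n * derivative q - (derivative (hermite n * q) - X * (hermite n * q)) := by
    rw [hermite_succ, derivative_mul]; ring
  rw [e1, J_sub, h0, sub_zero]

lemma J_iter (n : ℕ) (q : Polynomial ℤ) : J (hermite n * q) = J (derivative^[n] q) := by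
  induction n generalizing q with
  | zero => simp [hermite_zero]
  | succ n ih => rw [J_step, ih, Function.iterate_succ_apply]

lemma deriv_hermite (n : ℕ) :
    derivative (hermite (n+1)) = C ((n : ℤ) + 1) * hermite n := by
  induction n with
  | zero => simp [hermite_one, hermite_zero]
  | succ n ih =>
      rw [hermite_succ (n+1), derivative_sub, derivative_mul, derivative_X, one_mul, ih,
        derivative_C_mul]
      have : hermite (n+1) + X * (C ((n:ℤ)+1) * hermite n) - C ((n:ℤ)+1) * derivative (hermite n)
          = hermite (n+1) + C ((n:ℤ)+1) * (X * hermite n - derivative (hermite n)) := by ring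
      rw [this, ← hermite_succ]
      have hc : (((n+1 : ℕ) : ℤ) + 1) = ((n:ℤ)+1) + 1 := by push_cast; ring
      rw [hc]
      simp only [C_add, C_1, map_ofNat]
      ring

lemma iter_deriv_hermite (n : ℕ) :
    derivative^[n] (hermite n) = C ((Nat.factorial n : ℕ) : ℤ) := by
  induction n with
  | zero => simp [hermite_zero]
  | succ n ih =>
      rw [Function.iterate_succ_apply, deriv_hermite, iterate_derivative_C_mul, ih, ← C_mul,
        show ((n:ℤ)+1) * (Nat.factorial n : ℤ) = ((Nat.factorial (n+1) : ℕ) : ℤ) by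
          push_cast [Nat.factorial_succ]; ring]

lemma X_mul_hermite (n : ℕ) :
    X * hermite (n+1) = hermite (n+2) + C ((n : ℤ) + 1) * hermite n := by
  rw [hermite_succ (n+1), deriv_hermite]; ring

lemma h2_mul (m : ℕ) : hermite 2 * hermite (m+2) =
    hermite (m+4) + C (2*(m:ℤ)+4) * hermite (m+2)
      + C (((m:ℤ)+2)*((m:ℤ)+1)) * hermite m := by
  have h2 : (hermite 2 : Polynomial ℤ) = X*X - 1 := by
    rw [hermite_succ, hermite_one]; simp
  have e1 : X * hermite (m+2) = hermite (m+3) + C ((m:ℤ)+2) * hermite (m+1) := by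
    have := X_mul_hermite (m+1); push_cast at this
    convert this using 3; ring
  have e2 : X * hermite (m+3) = hermite (m+4) + C ((m:ℤ)+3) * hermite (m+2) := by
    have := X_mul_hermite (m+2); push_cast at this
    convert this using 3; ring
  have e3 : X * hermite (m+1) = hermite (m+2) + C ((m:ℤ)+1) * hermite m := by
    have := X_mul_hermite m; push_cast at this
    convert this using 3
  calc (hermite 2 : Polynomial ℤ) * hermite (m+2)
      = X * (X * hermite (m+2)) - hermite (m+2) := by rw [h2]; ring
    _ = X * hermite (m+3) + C ((m:ℤ)+2) * (X * hermite (m+1)) - hermite (m+2) := by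
        rw [e1]; ring
    _ = (hermite (m+4) + C ((m:ℤ)+3) * hermite (m+2))
        + C ((m:ℤ)+2) * (hermite (m+2) + C ((m:ℤ)+1) * hermite m) - hermite (m+2) := by
        rw [e2, e3]
    _ = hermite (m+4) + C (2*(m:ℤ)+4) * hermite (m+2)
        + C (((m:ℤ)+2)*((m:ℤ)+1)) * hermite m := by
        rw [show (2*(m:ℤ)+4) = ((m:ℤ)+3) + ((m:ℤ)+2) - 1 by ring,
          show (((m:ℤ)+2)*((m:ℤ)+1)) = ((m:ℤ)+2) * ((m:ℤ)+1) by ring]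
        simp only [C_sub, C_add, C_1, C_mul, map_ofNat]
        ring

lemma J_hermite_mul_of_lt {m n : ℕ} (h : n < m) : J (hermite m * hermite n) = 0 := by
  rw [J_iter, Polynomial.iterate_derivative_eq_zero (by simpa [natDegree_hermite] using h),
    J_zero]

lemma J_hermite_sq (n : ℕ) :
    J (hermite n * hermite n) = ((Nat.factorial n : ℕ) : ℝ) * J 1 := by
  rw [J_iter, iter_deriv_hermite, show (C ((Nat.factorial n : ℕ) : ℤ)) =
    C ((Nat.factorial n : ℕ) : ℤ) * 1 by ring, J_C_mul]
  push_cast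
  ring

lemma J_one : J 1 = Real.sqrt (2 * π) := by
  unfold J G
  simp only [map_one, one_mul]
  have harg : ∀ x : ℝ, -(x ^ 2 / 2) = -(1/2 : ℝ) * x ^ 2 := fun x => by ring
  simp_rw [harg]
  rw [integral_gaussian]
  congr 1
  rw [div_div_eq_mul_div]
  ring

lemma J_one_pos : 0 < J 1 := by
  rw [J_one]
  exact Real.sqrt_pos.2 (by positivity)

lemma J_main (k : ℕ) (hk : 1 ≤ k) :
    J (hermite k * hermite k * hermite 2)
      = (2 * (k : ℝ) * ((Nat.factorial k : ℕ) : ℝ)) * J 1 := by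
  match k, hk with
  | 1, _ =>
      have d2 : derivative (hermite 2) = C 2 * hermite 1 := by
        simpa using deriv_hermite 1
      have e : (hermite 2 : Polynomial ℤ) * hermite 1 = hermite 3 + C 2 * hermite 1 := by
        rw [hermite_succ 2, d2, hermite_one]
        ring
      have split : (hermite 1 : Polynomial ℤ) * hermite 1 * hermite 2
          = hermite 3 * hermite 1 + C 2 * (hermite 1 * hermite 1) := by
        calc (hermite 1 : Polynomial ℤ) * hermite 1 * hermite 2
            = (hermite 2 * hermite 1) * hermite 1 := by ring
          _ = (hermite 3 + C 2 * hermite 1) * hermite 1 := by rw [e]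
          _ = hermite 3 * hermite 1 + C 2 * (hermite 1 * hermite 1) := by ring
      rw [split, J_add, J_C_mul, J_hermite_mul_of_lt (by norm_num), J_hermite_sq]
      norm_num [Nat.factorial]
  | (m+2), _ =>
      have e := h2_mul m
      have split : (hermite (m+2) : Polynomial ℤ) * hermite (m+2) * hermite 2
          = hermite (m+4) * hermite (m+2)
            + C (2*(m:ℤ)+4) * (hermite (m+2) * hermite (m+2))
            + C (((m:ℤ)+2)*((m:ℤ)+1)) * (hermite (m+2) * hermite m) := by
        calc (hermite (m+2) : Polynomial ℤ) * hermite (m+2) * hermite 2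
            = (hermite 2 * hermite (m+2)) * hermite (m+2) := by ring
          _ = (hermite (m+4) + C (2*(m:ℤ)+4) * hermite (m+2)
              + C (((m:ℤ)+2)*((m:ℤ)+1)) * hermite m) * hermite (m+2) := by rw [e]
          _ = _ := by ring
      rw [split, J_add, J_add, J_C_mul, J_C_mul, J_hermite_sq,
        J_hermite_mul_of_lt (m := m+4) (n := m+2) (by omega),
        J_hermite_mul_of_lt (m := m+2) (n := m) (by omega)]
      push_cast
      ring

end HermiteIE

open MeasureTheory ProbabilityTheory in
/-- The square of a Hermite polynomial has information exponent at most 2: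
for k ≥ 1, the second Hermite coefficient E_{z ~ N(0,1)}[He_k(z)² He_2(z)] is nonzero. -/
theorem hermite_sq_information_exponent_le_two (k : ℕ) (hk : 1 ≤ k) :
    ∫ z, He k z ^ 2 * He 2 z ∂(gaussianReal 0 1) ≠ 0 := by
  have hdens : gaussianReal 0 1 = volume.withDensity (gaussianPDF 0 1) :=
    gaussianReal_of_var_ne_zero 0 one_ne_zero
  have key : ∫ z, He k z ^ 2 * He 2 z ∂(gaussianReal 0 1)
      = (Real.sqrt (2 * π))⁻¹ * HermiteIE.J (hermite k * hermite k * hermite 2) := by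
    rw [hdens]
    have hpdf : gaussianPDF 0 1
        = fun x => ((Real.toNNReal (gaussianPDFReal 0 1 x) : ℝ≥0) : ℝ≥0∞) := rfl
    rw [hpdf, integral_withDensity_eq_integral_smul
      ((measurable_gaussianPDFReal 0 1).real_toNNReal) _]
    unfold HermiteIE.J
    rw [← integral_const_mul]
    congr 1
    funext x
    have hnn : (0:ℝ) ≤ gaussianPDFReal 0 1 x := gaussianPDFReal_nonneg 0 1 x
    have hval : gaussianPDFReal 0 1 x = (Real.sqrt (2 * π))⁻¹ * HermiteIE.G x := by
      unfold gaussianPDFReal HermiteIE.G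
      rw [NNReal.coe_one, mul_one, mul_one, sub_zero, neg_div]
    rw [NNReal.smul_def, Real.coe_toNNReal _ hnn, hval]
    simp only [He, map_mul]
    rw [smul_eq_mul]
    ring
  rw [key, HermiteIE.J_main k hk]
  have h1 : (0:ℝ) < Real.sqrt (2 * π) := Real.sqrt_pos.2 (by positivity)
  have h2 : (0:ℝ) < HermiteIE.J 1 := HermiteIE.J_one_pos
  have h3 : (0:ℝ) < 2 * (k : ℝ) * ((Nat.factorial k : ℕ) : ℝ) := by
    have hk0 : (0:ℝ) < (k:ℝ) := by exact_mod_cast hk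
    have hf0 : (0:ℝ) < ((Nat.factorial k : ℕ) : ℝ) := by exact_mod_cast Nat.factorial_pos k
    positivity
  positivity
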